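/- Let E₁ and E₂ be symmetric positive definite k×k matrices and |r| < 1. Then the inverse of R = [[E₁, r√(E₁E₂)],[r(√(E₁E₂))ᵀ, E₂]] is (1-r²)⁻¹ [[E₁⁻¹, -r√(E₁⁻¹E₂⁻¹)],[-r(√(E₁⁻¹E₂⁻¹))ᵀ, E₂⁻¹]]. -/

import Mathlib

open Matrix

section

open scoped ComplexOrder

noncomputable def Matrix.PosSemidef.sqrt {n : Type*} {𝕜 : Type*} [Fintype n] [RCLike 𝕜]
    [DecidableEq n] {A : Matrix n n 𝕜} (hA : A.PosSemidef) : Matrix n n 𝕜 :=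
  hA.1.eigenvectorUnitary.1 * diagonal ((↑) ∘ (√·) ∘ hA.1.eigenvalues) *
  (star hA.1.eigenvectorUnitary : Matrix n n 𝕜)

end

section

open scoped MatrixOrder

theorem Matrix.PosSemidef.sqrt_eq_cfcSqrt {n : Type*} [Fintype n] [DecidableEq n]
    {A : Matrix n n ℝ} (hA : A.PosSemidef) : hA.sqrt = CFC.sqrt A := by
  rw [CFC.sqrt_eq_cfc, cfc_nnreal_eq_real _ A, hA.1.cfc_eq]
  simp only [IsHermitian.cfc, Matrix.PosSemidef.sqrt]
  congr 3
  ext i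
  simp [max_eq_left (hA.eigenvalues_nonneg i)]

theorem Matrix.PosSemidef.posSemidef_sqrt {n : Type*} [Fintype n] [DecidableEq n]
    {A : Matrix n n ℝ} (hA : A.PosSemidef) : hA.sqrt.PosSemidef := by
  rw [hA.sqrt_eq_cfcSqrt]
  exact (CFC.sqrt_nonneg A).posSemidef

theorem Matrix.PosSemidef.sqrt_mul_self {n : Type*} [Fintype n] [DecidableEq n]
    {A : Matrix n n ℝ} (hA : A.PosSemidef) : hA.sqrt * hA.sqrt = A := by
  rw [hA.sqrt_eq_cfcSqrt]
  exact CFC.sqrt_mul_sqrt_self A hA.nonneg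

theorem Matrix.PosSemidef.eq_sqrt_of_sq_eq {n : Type*} [Fintype n] [DecidableEq n]
    {A B : Matrix n n ℝ} (hB : B.PosSemidef) (hA : A.PosSemidef) (h : B ^ 2 = A) :
    B = hA.sqrt := by
  rw [hA.sqrt_eq_cfcSqrt]
  exact (CFC.sqrt_unique (by rw [← sq]; exact h) hB.nonneg).symm

end
noncomputable def principalSqrtMul {k : ℕ} {E₁ E₂ : Matrix (Fin k) (Fin k) ℝ}
    (h₁ : E₁.PosDef) (h₂ : E₂.PosDef) : Matrix (Fin k) (Fin k) ℝ :=
  h₁.posSemidef.sqrt *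
    (h₂.posSemidef.mul_mul_conjTranspose_same h₁.posSemidef.sqrt).sqrt *
    h₁.posSemidef.sqrt⁻¹

/-- For `|r| < 1`, the inverse of `R = [[E₁, r√(E₁E₂)], [r(√(E₁E₂))ᵀ, E₂]]` is
`(1-r²)⁻¹ [[E₁⁻¹, -r√(E₁⁻¹E₂⁻¹)], [-r(√(E₁⁻¹E₂⁻¹))ᵀ, E₂⁻¹]]`. -/
theorem pairwise_block_inv (k : ℕ) (E₁ E₂ : Matrix (Fin k) (Fin k) ℝ)
    (h₁ : E₁.PosDef) (h₂ : E₂.PosDef) (r : ℝ) (hr : |r| < 1) :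
    (Matrix.fromBlocks E₁ (r • principalSqrtMul h₁ h₂)
        (r • (principalSqrtMul h₁ h₂)ᵀ) E₂)⁻¹
      = (1 - r ^ 2)⁻¹ •
        Matrix.fromBlocks E₁⁻¹ ((-r) • principalSqrtMul h₁.inv h₂.inv)
          ((-r) • (principalSqrtMul h₁.inv h₂.inv)ᵀ) E₂⁻¹ := by
  classical
  set A : Matrix (Fin k) (Fin k) ℝ := h₁.posSemidef.sqrt with hAdef
  set B : Matrix (Fin k) (Fin k) ℝ :=
    (h₂.posSemidef.mul_mul_conjTranspose_same h₁.posSemidef.sqrt).sqrt with hBdef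
  have hAH : Aᴴ = A := h₁.posSemidef.posSemidef_sqrt.isHermitian
  have hBH : Bᴴ = B :=
    (h₂.posSemidef.mul_mul_conjTranspose_same h₁.posSemidef.sqrt).posSemidef_sqrt.isHermitian
  have hAT : Aᵀ = A := by rw [← conjTranspose_eq_transpose_of_trivial, hAH]
  have hBT : Bᵀ = B := by rw [← conjTranspose_eq_transpose_of_trivial, hBH]
  have hAA : A * A = E₁ := h₁.posSemidef.sqrt_mul_self
  have hBB : B * B = A * E₂ * A :=
    ((h₂.posSemidef.mul_mul_conjTranspose_same h₁.posSemidef.sqrt).sqrt_mul_self).trans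
      (by rw [hAH])
  have hdA : IsUnit A.det := by
    have h : A.det * A.det = E₁.det := by rw [← det_mul, hAA]
    exact isUnit_iff_ne_zero.mpr fun h0 => h₁.det_pos.ne' (by rw [← h, h0, mul_zero])
  have hdB : IsUnit B.det := by
    have h : B.det * B.det = A.det * E₂.det * A.det := by
      rw [← det_mul, hBB, det_mul, det_mul]
    refine isUnit_iff_ne_zero.mpr fun h0 => ?_
    have h2 : A.det * E₂.det * A.det = 0 := by rw [← h, h0, mul_zero]
    rcases mul_eq_zero.mp h2 with h' | h'
    · rcases mul_eq_zero.mp h' with h'' | h''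
      · exact hdA.ne_zero h''
      · exact h₂.det_pos.ne' h''
    · exact hdA.ne_zero h'
  haveI iA : Invertible A := A.invertibleOfIsUnitDet hdA
  haveI iB : Invertible B := B.invertibleOfIsUnitDet hdB
  have hA' : (h₁.inv).posSemidef.sqrt = A⁻¹ := by
    refine (PosSemidef.eq_sqrt_of_sq_eq (h₁.posSemidef.posSemidef_sqrt.inv)
      (h₁.inv).posSemidef ?_).symm
    rw [pow_two, ← Matrix.mul_inv_rev, hAA]
  have hB' : (h₂.inv.posSemidef.mul_mul_conjTranspose_same (h₁.inv).posSemidef.sqrt).sqrt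
      = B⁻¹ := by
    refine (PosSemidef.eq_sqrt_of_sq_eq
      ((h₂.posSemidef.mul_mul_conjTranspose_same h₁.posSemidef.sqrt).posSemidef_sqrt.inv)
      _ ?_).symm
    rw [hA', pow_two, ← Matrix.mul_inv_rev, hBB, Matrix.conjTranspose_nonsing_inv, hAH]
    simp [Matrix.mul_inv_rev, Matrix.mul_assoc]
  have hS : principalSqrtMul h₁ h₂ = A * B * A⁻¹ := rfl
  have hS' : principalSqrtMul h₁.inv h₂.inv = A⁻¹ * B⁻¹ * A := by
    show (h₁.inv).posSemidef.sqrt *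
      (h₂.inv.posSemidef.mul_mul_conjTranspose_same (h₁.inv).posSemidef.sqrt).sqrt *
      ((h₁.inv).posSemidef.sqrt)⁻¹ = _
    rw [hB', hA', Matrix.nonsing_inv_nonsing_inv A hdA]
  have hE2 : E₂ = A⁻¹ * (B * B) * A⁻¹ := by
    rw [hBB]
    simp [Matrix.mul_assoc]
  have hE2i : E₂⁻¹ = A * (B⁻¹ * B⁻¹) * A := by
    rw [hE2]
    simp [Matrix.mul_inv_rev, Matrix.nonsing_inv_nonsing_inv A hdA, Matrix.mul_assoc]
  have hSt : (principalSqrtMul h₁ h₂)ᵀ = A⁻¹ * B * A := by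
    rw [hS, Matrix.transpose_mul, Matrix.transpose_mul, Matrix.transpose_nonsing_inv, hAT, hBT,
      Matrix.mul_assoc]
  have hS't : (principalSqrtMul h₁.inv h₂.inv)ᵀ = A * B⁻¹ * A⁻¹ := by
    rw [hS', Matrix.transpose_mul, Matrix.transpose_mul, Matrix.transpose_nonsing_inv,
      Matrix.transpose_nonsing_inv, hAT, hBT, Matrix.mul_assoc]
  have eq1 : (A * B * A⁻¹) * (A * B⁻¹ * A⁻¹) = 1 := by
    simp [Matrix.mul_assoc]
  have eq4 : (A⁻¹ * B * A) * (A⁻¹ * B⁻¹ * A) = 1 := by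
    simp [Matrix.mul_assoc]
  have eq2 : (A * B * A⁻¹) * E₂⁻¹ = E₁ * (A⁻¹ * B⁻¹ * A) := by
    rw [hE2i, ← hAA]
    simp [Matrix.mul_assoc]
  have eq3 : (A⁻¹ * B * A) * E₁⁻¹ = E₂ * (A * B⁻¹ * A⁻¹) := by
    rw [hE2, ← hAA, Matrix.mul_inv_rev]
    simp [Matrix.mul_assoc]
  have hc : (1 - r ^ 2) ≠ 0 := by
    have h := abs_lt.mp hr
    nlinarith
  have hTL : E₁ * E₁⁻¹ + r • principalSqrtMul h₁ h₂ * ((-r) • (principalSqrtMul h₁.inv h₂.inv)ᵀ)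
      = (1 - r ^ 2) • (1 : Matrix (Fin k) (Fin k) ℝ) := by
    rw [hS, hS't, Matrix.smul_mul, Matrix.mul_smul, smul_smul, eq1,
      Matrix.mul_nonsing_inv _ h₁.det_pos.ne'.isUnit]
    module
  have hTR : E₁ * ((-r) • principalSqrtMul h₁.inv h₂.inv) + r • principalSqrtMul h₁ h₂ * E₂⁻¹
      = 0 := by
    rw [hS, hS', Matrix.mul_smul, Matrix.smul_mul, eq2]
    module
  have hBL : r • (principalSqrtMul h₁ h₂)ᵀ * E₁⁻¹
      + E₂ * ((-r) • (principalSqrtMul h₁.inv h₂.inv)ᵀ) = 0 := by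
    rw [hSt, hS't, Matrix.smul_mul, Matrix.mul_smul, eq3]
    module
  have hBR : r • (principalSqrtMul h₁ h₂)ᵀ * ((-r) • principalSqrtMul h₁.inv h₂.inv) + E₂ * E₂⁻¹
      = (1 - r ^ 2) • (1 : Matrix (Fin k) (Fin k) ℝ) := by
    rw [hSt, hS', Matrix.smul_mul, Matrix.mul_smul, smul_smul, eq4,
      Matrix.mul_nonsing_inv _ h₂.det_pos.ne'.isUnit]
    module
  refine Matrix.inv_eq_right_inv ?_
  rw [Matrix.mul_smul, Matrix.fromBlocks_multiply, hTL, hTR, hBL, hBR,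
    show (Matrix.fromBlocks ((1 - r ^ 2) • (1 : Matrix (Fin k) (Fin k) ℝ)) 0 0
        ((1 - r ^ 2) • (1 : Matrix (Fin k) (Fin k) ℝ)))
      = (1 - r ^ 2) • (1 : Matrix (Fin k ⊕ Fin k) (Fin k ⊕ Fin k) ℝ) by
        rw [← Matrix.fromBlocks_one, Matrix.fromBlocks_smul, smul_zero],
    smul_smul, inv_mul_cancel₀ hc, one_smul]
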